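/- Let α > 1, K ≥ 2 an integer, i* ∈ {1,…,K}, and λ ∈ [0,∞)^K with λ_{i*} = 0 and ∑_{j≠i*} (2^{1/α}+λ_j)^{-α} ≤ 1/2. Then for every i ≠ i*, ∫_1^∞ α (z+λ_i)^{-(α+1)} ∏_{j≠i} (1 − (z+λ_j)^{-α}) dz ≥ 1 / (2e²(1+λ_i)^α). -/

import Mathlib

open MeasureTheory Set

private lemma exp_neg_two_mul_le {x : ℝ} (hx0 : 0 ≤ x) (hx : x ≤ 1 / 2) :
    Real.exp (-(2 * x)) ≤ 1 - x := by
  have h1 : 1 + 2 * x ≤ Real.exp (2 * x) := by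
    have := Real.add_one_le_exp (2 * x); linarith
  have h2 : Real.exp (-(2 * x)) = 1 / Real.exp (2 * x) := by
    rw [Real.exp_neg]; ring
  have hpos : (0 : ℝ) < 1 + 2 * x := by linarith
  have h3 : 1 / Real.exp (2 * x) ≤ 1 / (1 + 2 * x) :=
    one_div_le_one_div_of_le hpos h1
  have h4 : 1 / (1 + 2 * x) ≤ 1 - x := by
    rw [div_le_iff₀ hpos]; nlinarith
  linarith [h2 ▸ h3]

private lemma integral_Ioi_shift_rpow (p : ℝ) (hp : p < -1) (c a : ℝ) (hca : 0 < c + a) :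
    ∫ z in Ioi c, (z + a) ^ p = -(c + a) ^ (p + 1) / (p + 1) := by
  have hmp : MeasurePreserving (· + a) (volume : Measure ℝ) volume :=
    measurePreserving_add_right volume a
  have hemb : MeasurableEmbedding (· + a : ℝ → ℝ) :=
    (MeasurableEquiv.addRight a).measurableEmbedding
  have hpre : (· + a : ℝ → ℝ) ⁻¹' Ioi (c + a) = Ioi c := by
    ext x; simp [Set.mem_Ioi]
  calc ∫ z in Ioi c, (z + a) ^ p
      = ∫ z in (· + a : ℝ → ℝ) ⁻¹' Ioi (c + a), (fun y : ℝ => y ^ p) (z + a) := by rw [hpre]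
    _ = ∫ z in Ioi (c + a), z ^ p := by
        simpa using hmp.setIntegral_preimage_emb hemb (fun y : ℝ => y ^ p) (Ioi (c + a))
    _ = -(c + a) ^ (p + 1) / (p + 1) := integral_Ioi_rpow_of_lt hp hca

/-- on the event `D_t` (optimal arm identified), the FTPL exploitation
probability of every suboptimal arm is at least `1/(2e²(1+λ_i)^α)`. -/
theorem ftpl_pareto_prob_lower_bound_suboptimal
    (α : ℝ) (hα : 1 < α) (K : ℕ) (hK : 2 ≤ K) (istar : Fin K)
    (lam : Fin K → ℝ) (hlam : ∀ j, 0 ≤ lam j) (hstar : lam istar = 0)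
    (hD : ∑ j ∈ Finset.univ.erase istar, ((2 : ℝ) ^ (1 / α) + lam j) ^ (-α) ≤ 1 / 2)
    (i : Fin K) (hi : i ≠ istar) :
    1 / (2 * Real.exp 2 * (1 + lam i) ^ α)
      ≤ ∫ z in Set.Ioi (1 : ℝ),
          α * (z + lam i) ^ (-(α + 1)) *
            ∏ j ∈ Finset.univ.erase i, (1 - (z + lam j) ^ (-α)) := by
  have hα0 : (0 : ℝ) < α := by linarith
  set c : ℝ := (2 : ℝ) ^ (1 / α) with hc_def
  have hc1 : 1 ≤ c := Real.one_le_rpow one_le_two (by positivity)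
  have hc0 : 0 < c := by linarith
  have hcα : c ^ α = 2 := by
    rw [hc_def, ← Real.rpow_mul (by norm_num), one_div_mul_cancel (ne_of_gt hα0),
      Real.rpow_one]
  have hcnegα : c ^ (-α) = 1 / 2 := by
    rw [Real.rpow_neg hc0.le, hcα]; norm_num
  set f : ℝ → ℝ := fun z =>
    α * (z + lam i) ^ (-(α + 1)) * ∏ j ∈ Finset.univ.erase i, (1 - (z + lam j) ^ (-α))
    with hf_def
  -- measurability
  have hf_meas : Measurable f := by
    apply Measurable.mul
    · fun_prop
    · exact Finset.measurable_prod _ fun j _ => by fun_prop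
  -- nonnegativity on Ioi 1
  have hf_nonneg : ∀ z ∈ Ioi (1 : ℝ), 0 ≤ f z := by
    intro z hz
    have hz1 : (1 : ℝ) < z := hz
    apply mul_nonneg
    · apply mul_nonneg hα0.le
      exact Real.rpow_nonneg (by linarith [hlam i]) _
    · apply Finset.prod_nonneg
      intro j _
      have h1 : (1 : ℝ) ≤ z + lam j := by linarith [hlam j]
      have := Real.rpow_le_one_of_one_le_of_nonpos h1 (by linarith : -α ≤ 0)
      linarith
  -- prod ≤ 1 and bound for integrability
  have hf_bound : ∀ z ∈ Ioi (1 : ℝ), f z ≤ α * z ^ (-(α + 1)) := by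
    intro z hz
    have hz1 : (1 : ℝ) < z := hz
    have hprod : ∏ j ∈ Finset.univ.erase i, (1 - (z + lam j) ^ (-α)) ≤ 1 := by
      apply Finset.prod_le_one
      · intro j _
        have h1 : (1 : ℝ) ≤ z + lam j := by linarith [hlam j]
        have := Real.rpow_le_one_of_one_le_of_nonpos h1 (by linarith : -α ≤ 0)
        linarith
      · intro j _
        have : 0 ≤ (z + lam j) ^ (-α) := Real.rpow_nonneg (by linarith [hlam j]) _
        linarith
    have h2 : (z + lam i) ^ (-(α + 1)) ≤ z ^ (-(α + 1)) :=
      Real.rpow_le_rpow_of_nonpos (by linarith) (by linarith [hlam i]) (by linarith)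
    calc f z ≤ α * (z + lam i) ^ (-(α + 1)) * 1 := by
          apply mul_le_mul_of_nonneg_left hprod
          exact mul_nonneg hα0.le (Real.rpow_nonneg (by linarith [hlam i]) _)
      _ = α * (z + lam i) ^ (-(α + 1)) := mul_one _
      _ ≤ α * z ^ (-(α + 1)) := mul_le_mul_of_nonneg_left h2 hα0.le
  -- integrability on Ioi 1
  have hg_int : IntegrableOn (fun z : ℝ => α * z ^ (-(α + 1))) (Ioi (1 : ℝ)) := by
    exact (integrableOn_Ioi_rpow_of_lt (by linarith : -(α + 1) < -1) one_pos).const_mul α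
  have hf_int : IntegrableOn f (Ioi (1 : ℝ)) := by
    apply Integrable.mono' hg_int (hf_meas.aestronglyMeasurable.restrict)
    filter_upwards [ae_restrict_mem measurableSet_Ioi] with z hz
    rw [Real.norm_eq_abs, abs_of_nonneg (hf_nonneg z hz)]
    exact hf_bound z hz
  -- pointwise lower bound on Ioi c
  have key : ∀ z ∈ Ioi c, Real.exp (-2) * (α * (z + lam i) ^ (-(α + 1))) ≤ f z := by
    intro z hz
    have hzc : c < z := hz
    have hz1 : (1 : ℝ) ≤ z := le_trans hc1 hzc.le
    have hx_half : ∀ j : Fin K, (z + lam j) ^ (-α) ≤ 1 / 2 := by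
      intro j
      have : c ≤ z + lam j := by linarith [hlam j]
      calc (z + lam j) ^ (-α) ≤ c ^ (-α) :=
            Real.rpow_le_rpow_of_nonpos hc0 this (by linarith)
        _ = 1 / 2 := hcnegα
    have hx_nonneg : ∀ j : Fin K, 0 ≤ (z + lam j) ^ (-α) := fun j =>
      Real.rpow_nonneg (by linarith [hlam j]) _
    -- sum bound
    have hsum : ∑ j ∈ Finset.univ.erase i, (z + lam j) ^ (-α) ≤ 1 := by
      have histar : istar ∈ Finset.univ.erase i := by
        simp [Finset.mem_erase, Ne.symm hi]
      rw [← Finset.add_sum_erase _ _ histar]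
      have h1 : (z + lam istar) ^ (-α) ≤ 1 / 2 := by
        rw [hstar, add_zero]
        calc z ^ (-α) ≤ c ^ (-α) :=
              Real.rpow_le_rpow_of_nonpos hc0 hzc.le (by linarith)
          _ = 1 / 2 := hcnegα
      have h2 : ∑ j ∈ (Finset.univ.erase i).erase istar, (z + lam j) ^ (-α) ≤ 1 / 2 := by
        calc ∑ j ∈ (Finset.univ.erase i).erase istar, (z + lam j) ^ (-α)
            ≤ ∑ j ∈ (Finset.univ.erase i).erase istar, (c + lam j) ^ (-α) := by
              apply Finset.sum_le_sum
              intro j _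
              exact Real.rpow_le_rpow_of_nonpos (by linarith [hlam j])
                (by linarith [hlam j]) (by linarith)
          _ ≤ ∑ j ∈ Finset.univ.erase istar, (c + lam j) ^ (-α) := by
              apply Finset.sum_le_sum_of_subset_of_nonneg
              · rw [Finset.erase_right_comm]
                exact Finset.erase_subset _ _
              · intro j _ _
                exact Real.rpow_nonneg (by linarith [hlam j]) _
          _ ≤ 1 / 2 := hD
      linarith
    -- product bound
    have hprod : Real.exp (-2) ≤ ∏ j ∈ Finset.univ.erase i, (1 - (z + lam j) ^ (-α)) := by
      calc Real.exp (-2)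
          ≤ Real.exp (-(2 * ∑ j ∈ Finset.univ.erase i, (z + lam j) ^ (-α))) := by
            apply Real.exp_le_exp.mpr; linarith
        _ = ∏ j ∈ Finset.univ.erase i, Real.exp (-(2 * (z + lam j) ^ (-α))) := by
            rw [← Real.exp_sum]
            congr 1
            rw [Finset.mul_sum, ← Finset.sum_neg_distrib]
        _ ≤ ∏ j ∈ Finset.univ.erase i, (1 - (z + lam j) ^ (-α)) := by
            apply Finset.prod_le_prod
            · intro j _; exact (Real.exp_pos _).le
            · intro j _; exact exp_neg_two_mul_le (hx_nonneg j) (hx_half j)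
    have hpos : 0 ≤ α * (z + lam i) ^ (-(α + 1)) :=
      mul_nonneg hα0.le (Real.rpow_nonneg (by linarith [hlam i]) _)
    calc Real.exp (-2) * (α * (z + lam i) ^ (-(α + 1)))
        = α * (z + lam i) ^ (-(α + 1)) * Real.exp (-2) := by ring
      _ ≤ α * (z + lam i) ^ (-(α + 1)) *
            ∏ j ∈ Finset.univ.erase i, (1 - (z + lam j) ^ (-α)) :=
          mul_le_mul_of_nonneg_left hprod hpos
      _ = f z := rfl
  -- integral over Ioi c of the lower bound function
  have hlow_int : IntegrableOn (fun z : ℝ => Real.exp (-2) * (α * (z + lam i) ^ (-(α + 1))))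
      (Ioi c) := by
    have : IntegrableOn (fun z : ℝ => (z + lam i) ^ (-(α + 1))) (Ioi c) := by
      have hmp : MeasurePreserving (· + lam i) (volume : Measure ℝ) volume :=
        measurePreserving_add_right volume (lam i)
      have hemb : MeasurableEmbedding (· + lam i : ℝ → ℝ) :=
        (MeasurableEquiv.addRight (lam i)).measurableEmbedding
      have hbase : IntegrableOn (fun z : ℝ => z ^ (-(α + 1))) (Ioi (c + lam i)) :=
        integrableOn_Ioi_rpow_of_lt (by linarith : -(α + 1) < -1) (by linarith [hlam i])
      have hpre : (· + lam i : ℝ → ℝ) ⁻¹' Ioi (c + lam i) = Ioi c := by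
        ext x; simp [Set.mem_Ioi]
      have := (hmp.restrict_preimage_emb hemb (Ioi (c + lam i))).integrable_comp_emb hemb
        |>.mpr hbase
      rwa [hpre] at this
    exact (this.const_mul α).const_mul _
  have hval : ∫ z in Ioi c, Real.exp (-2) * (α * (z + lam i) ^ (-(α + 1)))
      = Real.exp (-2) * (c + lam i) ^ (-α) := by
    rw [integral_const_mul, integral_const_mul,
      integral_Ioi_shift_rpow (-(α + 1)) (by linarith) c (lam i) (by linarith [hlam i])]
    have : -(α + 1) + 1 = -α := by ring
    rw [this]
    field_simp
  -- chain of inequalities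
  have step1 : ∫ z in Ioi c, f z ≤ ∫ z in Ioi (1 : ℝ), f z := by
    apply setIntegral_mono_set hf_int
    · filter_upwards [ae_restrict_mem measurableSet_Ioi] with z hz using hf_nonneg z hz
    · exact HasSubset.Subset.eventuallyLE (Ioi_subset_Ioi hc1)
  have step2 : ∫ z in Ioi c, Real.exp (-2) * (α * (z + lam i) ^ (-(α + 1)))
      ≤ ∫ z in Ioi c, f z := by
    apply setIntegral_mono_on hlow_int (hf_int.mono_set (Ioi_subset_Ioi hc1))
      measurableSet_Ioi
    exact key
  -- final numeric bound
  have hfin : 1 / (2 * Real.exp 2 * (1 + lam i) ^ α)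
      ≤ Real.exp (-2) * (c + lam i) ^ (-α) := by
    have h1l : (0 : ℝ) < 1 + lam i := by linarith [hlam i]
    have hcl : (0 : ℝ) < c + lam i := by linarith [hlam i]
    have hle : c + lam i ≤ c * (1 + lam i) := by nlinarith [hlam i]
    have h2 : (c + lam i) ^ α ≤ (c * (1 + lam i)) ^ α :=
      Real.rpow_le_rpow hcl.le hle hα0.le
    have h3 : (c * (1 + lam i)) ^ α = 2 * (1 + lam i) ^ α := by
      rw [Real.mul_rpow hc0.le h1l.le, hcα]
    have h4 : (c + lam i) ^ α ≤ 2 * (1 + lam i) ^ α := h3 ▸ h2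
    have hp1 : (0 : ℝ) < (c + lam i) ^ α := Real.rpow_pos_of_pos hcl _
    have hp2 : (0 : ℝ) < (1 + lam i) ^ α := Real.rpow_pos_of_pos h1l _
    have hinv : 1 / (2 * (1 + lam i) ^ α) ≤ (c + lam i) ^ (-α) := by
      rw [Real.rpow_neg hcl.le, ← one_div]
      apply one_div_le_one_div_of_le hp1 h4
    have hexp : Real.exp (-2) = 1 / Real.exp 2 := by
      rw [Real.exp_neg]; ring
    rw [hexp]
    calc 1 / (2 * Real.exp 2 * (1 + lam i) ^ α)
        = (1 / Real.exp 2) * (1 / (2 * (1 + lam i) ^ α)) := by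
          field_simp
      _ ≤ (1 / Real.exp 2) * (c + lam i) ^ (-α) := by
          apply mul_le_mul_of_nonneg_left hinv
          positivity
  calc 1 / (2 * Real.exp 2 * (1 + lam i) ^ α)
      ≤ Real.exp (-2) * (c + lam i) ^ (-α) := hfin
    _ = ∫ z in Ioi c, Real.exp (-2) * (α * (z + lam i) ^ (-(α + 1))) := hval.symm
    _ ≤ ∫ z in Ioi c, f z := step2
    _ ≤ ∫ z in Ioi (1 : ℝ), f z := step1
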